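/- If H is a graph with γ_I(H) = γ(H) = 3, then for any graph G, γ_I(G∘H) = γ_{(2,2,2,0)}(G). -/

import Mathlib

open scoped Classical
open Finset SimpleGraph

/-- A `w`-dominating function: `f : V → {0,…,l}` with `f(N(v)) ≥ w_{f(v)}` for all `v`. -/
def WDom {V : Type*} [Fintype V] (G : SimpleGraph V) {l : ℕ} (w : Fin (l+1) → ℕ)
    (f : V → Fin (l+1)) : Prop :=
  ∀ v, w (f v) ≤ ∑ u, if G.Adj v u then (f u : ℕ) else 0

/-- The `w`-domination number. -/
noncomputable def gammaW {V : Type*} [Fintype V] (G : SimpleGraph V) {l : ℕ}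
    (w : Fin (l+1) → ℕ) : ℕ :=
  sInf {n | ∃ f : V → Fin (l+1), WDom G w f ∧ ∑ v, (f v : ℕ) = n}

/-- The Italian domination number `γ_I = γ_{(2,0,0)}`. -/
noncomputable def gammaI {V : Type*} [Fintype V] (G : SimpleGraph V) : ℕ :=
  gammaW G ![2,0,0]

/-- The domination number. -/
noncomputable def gamma {V : Type*} [Fintype V] (G : SimpleGraph V) : ℕ :=
  sInf {n | ∃ S : Finset V, (∀ v, v ∈ S ∨ ∃ u ∈ S, G.Adj u v) ∧ S.card = n}

/-- The total domination number. -/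
noncomputable def gammaT {V : Type*} [Fintype V] (G : SimpleGraph V) : ℕ :=
  sInf {n | ∃ S : Finset V, (∀ v, ∃ u ∈ S, G.Adj u v) ∧ S.card = n}

/-- The 2-domination number. -/
noncomputable def gamma2 {V : Type*} [Fintype V] (G : SimpleGraph V) : ℕ :=
  sInf {n | ∃ S : Finset V, (∀ v ∉ S, 2 ≤ (S.filter (fun u => G.Adj u v)).card) ∧ S.card = n}

/-- The double domination number. -/
noncomputable def gammaX2 {V : Type*} [Fintype V] (G : SimpleGraph V) : ℕ :=
  sInf {n | ∃ S : Finset V, (∀ v, 2 ≤ (S.filter (fun u => u = v ∨ G.Adj u v)).card) ∧ S.card = n}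

/-- The double total domination number. -/
noncomputable def gammaX2T {V : Type*} [Fintype V] (G : SimpleGraph V) : ℕ :=
  sInf {n | ∃ S : Finset V, (∀ v, 2 ≤ (S.filter (fun u => G.Adj u v)).card) ∧ S.card = n}

/-- The lexicographic product `G ∘ H`. -/
def lexProd {V W : Type*} (G : SimpleGraph V) (H : SimpleGraph W) : SimpleGraph (V × W) where
  Adj x y := G.Adj x.1 y.1 ∨ (x.1 = y.1 ∧ H.Adj x.2 y.2)
  symm := by
    constructor
    rintro x y (h | ⟨h1, h2⟩)
    · exact Or.inl h.symm
    · exact Or.inr ⟨h1.symm, h2.symm⟩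
  loopless := by
    constructor
    rintro x (h | ⟨_, h⟩)
    · exact G.ne_of_adj h rfl
    · exact H.ne_of_adj h rfl

lemma lex_sum_split {V W : Type*} [Fintype V] [Fintype W] (G : SimpleGraph V)
    (H : SimpleGraph W) (g : V × W → ℕ) (v : V) (w : W) :
    ∑ u, (if (lexProd G H).Adj (v,w) u then g u else 0)
      = (∑ v', if G.Adj v v' then (∑ w', g (v', w')) else 0)
        + ∑ w', if H.Adj w w' then g (v, w') else 0 := by
  rw [Fintype.sum_prod_type]
  have key : ∀ v' : V, (∑ w', if (lexProd G H).Adj (v,w) (v',w') then g (v',w') else 0)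
      = (if G.Adj v v' then (∑ w', g (v', w')) else 0)
        + (if v' = v then (∑ w', if H.Adj w w' then g (v, w') else 0) else 0) := by
    intro v'
    by_cases h : G.Adj v v'
    · have hne : v' ≠ v := fun e => G.loopless.irrefl v (e ▸ h)
      simp [lexProd, h, hne]
    · by_cases h2 : v' = v
      · subst h2
        simp [lexProd, h]
      · simp only [lexProd]
        simp [h, h2]
        intro x e
        exact absurd e.symm h2
  rw [Finset.sum_congr rfl (fun v' _ => key v'), Finset.sum_add_distrib]
  simp

lemma w2220_eq3 : ∀ i : Fin 4, (i:ℕ) = 3 → ![2,2,2,0] i = 0 := by decide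
lemma w2220_ne3 : ∀ i : Fin 4, (i:ℕ) ≠ 3 → ![2,2,2,0] i = 2 := by decide
lemma w200_ne0 : ∀ i : Fin 3, i ≠ 0 → ![2,0,0] i = 0 := by decide
lemma w200_zero : ![2,0,0] (0:Fin 3) = 2 := rfl

def clip3 (n : ℕ) : Fin 4 := ⟨min 3 n, by omega⟩
def clip2 (n : ℕ) : Fin 3 := ⟨min 2 n, by omega⟩
lemma clip3_val (n : ℕ) : (clip3 n : ℕ) = min 3 n := rfl
lemma clip2_val (n : ℕ) : (clip2 n : ℕ) = min 2 n := rfl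

/-- the function placed on `G ∘ H` from a `(2,2,2,0)`-function `f` on `G` and an
Italian function `h0` on `H`. -/
noncomputable def mkg {V W : Type*} (f : V → Fin 4) (h0 : W → Fin 3) (w0 : W) : V × W → Fin 3 :=
  fun p => if (f p.1 : ℕ) = 3 then h0 p.2 else if p.2 = w0 then clip2 (f p.1 : ℕ) else 0

lemma mkg_eq3 {V W : Type*} (f : V → Fin 4) (h0 : W → Fin 3) (w0 : W) (v : V) (w : W)
    (h3 : (f v : ℕ) = 3) : mkg f h0 w0 (v, w) = h0 w := by
  simp [mkg, h3]

lemma mkg_ne3 {V W : Type*} (f : V → Fin 4) (h0 : W → Fin 3) (w0 : W) (v : V) (w : W)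
    (h3 : (f v : ℕ) ≠ 3) :
    (mkg f h0 w0 (v, w) : ℕ) = if w = w0 then (f v : ℕ) else 0 := by
  have hle : (f v : ℕ) ≤ 2 := by have := (f v).is_le; omega
  by_cases hw : w = w0
  · simp [mkg, h3, hw, clip2_val, Nat.min_eq_right hle]
  · simp [mkg, h3, hw]

theorem italian_lex_of_gammaI_eq_gamma_eq_three {V W : Type*} [Fintype V] [Fintype W]
    (G : SimpleGraph V) (H : SimpleGraph W)
    (hHI : gammaI H = 3) (hH : gamma H = 3) :
    gammaI (lexProd G H) = gammaW G ![2,2,2,0] := by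
  classical
  -- an optimal Italian function on H, of weight 3
  have hHne : {n | ∃ f : W → Fin 3, WDom H ![2,0,0] f ∧ ∑ w, (f w : ℕ) = n}.Nonempty := by
    refine ⟨∑ w : W, ((2 : Fin 3) : ℕ), fun _ => 2, fun w => ?_, rfl⟩
    have h : ![2,0,0] (2 : Fin 3) = 0 := rfl
    rw [h]; exact Nat.zero_le _
  obtain ⟨h0, hh0, hh0sum⟩ := Nat.sInf_mem hHne
  rw [show sInf {n | ∃ f : W → Fin 3, WDom H ![2,0,0] f ∧ ∑ w, (f w : ℕ) = n} = gammaI H from rfl,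
    hHI] at hh0sum
  -- W is nonempty
  obtain ⟨w0, -⟩ : (Finset.univ : Finset W).Nonempty := by
    rcases Finset.eq_empty_or_nonempty (Finset.univ : Finset W) with h | h
    · rw [h, Finset.sum_empty] at hh0sum; exact absurd hh0sum (by norm_num)
    · exact h
  -- the Italian set for lexProd G H is nonempty
  have hLne : {n | ∃ f : V × W → Fin 3, WDom (lexProd G H) ![2,0,0] f ∧ ∑ p, (f p : ℕ) = n}.Nonempty := by
    refine ⟨∑ p : V × W, ((2 : Fin 3) : ℕ), fun _ => 2, fun p => ?_, rfl⟩
    have h : ![2,0,0] (2 : Fin 3) = 0 := rfl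
    rw [h]; exact Nat.zero_le _
  -- the (2,2,2,0) set for G is nonempty
  have hGne : {n | ∃ f : V → Fin 4, WDom G ![2,2,2,0] f ∧ ∑ v, (f v : ℕ) = n}.Nonempty := by
    refine ⟨∑ v : V, ((3 : Fin 4) : ℕ), fun _ => 3, fun v => ?_, rfl⟩
    have h : ![2,2,2,0] (3 : Fin 4) = 0 := rfl
    rw [h]; exact Nat.zero_le _
  apply le_antisymm
  · -- γ_I(G∘H) ≤ γ_{2220}(G)
    obtain ⟨f, hf, hfsum⟩ := Nat.sInf_mem hGne
    have hcopy : ∀ v : V, (∑ w, (mkg f h0 w0 (v, w) : ℕ)) = (f v : ℕ) := by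
      intro v
      by_cases h3 : (f v : ℕ) = 3
      · have e : ∀ w ∈ Finset.univ, (mkg f h0 w0 (v, w) : ℕ) = (h0 w : ℕ) := by
          intro w _; rw [mkg_eq3 f h0 w0 v w h3]
        rw [Finset.sum_congr rfl e, hh0sum, h3]
      · have e : ∀ w ∈ Finset.univ, (mkg f h0 w0 (v, w) : ℕ) = if w = w0 then (f v : ℕ) else 0 := by
          intro w _; exact mkg_ne3 f h0 w0 v w h3
        rw [Finset.sum_congr rfl e, Finset.sum_ite_eq' Finset.univ w0]
        simp
    have hWg : WDom (lexProd G H) ![2,0,0] (mkg f h0 w0) := by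
      rintro ⟨v, w⟩
      by_cases hg0 : mkg f h0 w0 (v, w) = 0
      · rw [hg0, w200_zero, lex_sum_split]
        by_cases h3 : (f v : ℕ) = 3
        · have h0w : h0 w = 0 := by rw [← mkg_eq3 f h0 w0 v w h3]; exact hg0
          have h1 := hh0 w
          rw [h0w, w200_zero] at h1
          have e : ∀ w' ∈ Finset.univ, (if H.Adj w w' then (h0 w' : ℕ) else 0)
              = if H.Adj w w' then (mkg f h0 w0 (v, w') : ℕ) else 0 := by
            intro w' _; rw [mkg_eq3 f h0 w0 v w' h3]
          rw [Finset.sum_congr rfl e] at h1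
          exact le_trans h1 (Nat.le_add_left _ _)
        · have h1 := hf v
          rw [w2220_ne3 _ h3] at h1
          have e : ∀ v' ∈ Finset.univ, (if G.Adj v v' then (f v' : ℕ) else 0)
              = if G.Adj v v' then (∑ w', (mkg f h0 w0 (v', w') : ℕ)) else 0 := by
            intro v' _; rw [hcopy v']
          rw [Finset.sum_congr rfl e] at h1
          exact le_trans h1 (Nat.le_add_right _ _)
      · rw [w200_ne0 _ hg0]; exact Nat.zero_le _
    have hsum : ∑ p : V × W, (mkg f h0 w0 p : ℕ) = gammaW G ![2,2,2,0] := by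
      rw [Fintype.sum_prod_type, Finset.sum_congr rfl (fun v _ => hcopy v)]
      exact hfsum
    exact hsum ▸ Nat.sInf_le ⟨mkg f h0 w0, hWg, rfl⟩
  · -- γ_{2220}(G) ≤ γ_I(G∘H)
    obtain ⟨g, hg, hgsum⟩ := Nat.sInf_mem hLne
    have hcross : ∀ v : V, (∑ w, (g (v, w) : ℕ)) ≤ 2 →
        2 ≤ ∑ v', if G.Adj v v' then (∑ w, (g (v', w) : ℕ)) else 0 := by
      intro v hsv
      by_contra hlt
      push_neg at hlt
      have hcr : (∑ v', if G.Adj v v' then (∑ w, (g (v', w) : ℕ)) else 0) ≤ 1 :=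
        Nat.lt_succ_iff.mp hlt
      set S : Finset W := Finset.univ.filter (fun w => g (v, w) ≠ 0) with hSdef
      have hdom : ∀ w, w ∈ S ∨ ∃ u ∈ S, H.Adj u w := by
        intro w
        by_cases hw : g (v, w) = 0
        · right
          have h1 := hg (v, w)
          rw [hw, w200_zero, lex_sum_split] at h1
          have hinner : 1 ≤ ∑ w', if H.Adj w w' then (g (v, w') : ℕ) else 0 := by
            rcases Nat.eq_zero_or_pos (∑ w', if H.Adj w w' then (g (v, w') : ℕ) else 0) with hz | hp
            · rw [hz, Nat.add_zero] at h1
              exact absurd (le_trans h1 hcr) (by norm_num)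
            · exact hp
          obtain ⟨w', hw'⟩ : ∃ w', (if H.Adj w w' then (g (v, w') : ℕ) else 0) ≠ 0 := by
            by_contra hc
            push_neg at hc
            rw [Finset.sum_congr rfl (fun w' _ => hc w')] at hinner
            simp at hinner
          by_cases ha : H.Adj w w'
          · rw [if_pos ha] at hw'
            refine ⟨w', ?_, ha.symm⟩
            simp only [hSdef, Finset.mem_filter, Finset.mem_univ, true_and]
            intro e; rw [e] at hw'; simp at hw'
          · rw [if_neg ha] at hw'; exact absurd rfl hw'
        · left; simp [hSdef, hw]
      have hcard : S.card ≤ 2 := by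
        have h1 : S.card ≤ ∑ w ∈ S, (g (v, w) : ℕ) := by
          calc S.card = ∑ _w ∈ S, 1 := by simp
            _ ≤ ∑ w ∈ S, (g (v, w) : ℕ) := by
                refine Finset.sum_le_sum fun w hw => ?_
                simp only [hSdef, Finset.mem_filter] at hw
                exact Nat.one_le_iff_ne_zero.2 (fun h => hw.2 (Fin.ext h))
        have h2 : ∑ w ∈ S, (g (v, w) : ℕ) ≤ ∑ w, (g (v, w) : ℕ) :=
          Finset.sum_le_sum_of_subset (Finset.subset_univ S)
        exact le_trans h1 (le_trans h2 hsv)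
      have hmem : S.card ∈ {n | ∃ S : Finset W, (∀ v, v ∈ S ∨ ∃ u ∈ S, H.Adj u v) ∧ S.card = n} :=
        ⟨S, hdom, rfl⟩
      have h3 := Nat.sInf_le hmem
      rw [show sInf {n | ∃ S : Finset W, (∀ v, v ∈ S ∨ ∃ u ∈ S, H.Adj u v) ∧ S.card = n}
        = gamma H from rfl, hH] at h3
      exact absurd (le_trans h3 hcard) (by norm_num)
    have hfval : ∀ v, ((clip3 (∑ w, (g (v, w) : ℕ)) : Fin 4) : ℕ)
        = min 3 (∑ w, (g (v, w) : ℕ)) := fun v => rfl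
    have hWf : WDom G ![2,2,2,0] (fun v => clip3 (∑ w, (g (v, w) : ℕ))) := by
      intro v
      by_cases h3 : 3 ≤ ∑ w, (g (v, w) : ℕ)
      · rw [w2220_eq3 _ (by rw [hfval]; exact Nat.min_eq_left h3)]
        exact Nat.zero_le _
      · have hsv : (∑ w, (g (v, w) : ℕ)) ≤ 2 :=
          Nat.lt_succ_iff.mp (Nat.lt_of_not_le h3)
        rw [w2220_ne3 _ (by rw [hfval]; exact fun hmin => h3 (min_eq_left_iff.mp hmin))]
        have hc := hcross v hsv
        by_cases hbig : ∃ v', G.Adj v v' ∧ 2 ≤ ∑ w, (g (v', w) : ℕ)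
        · obtain ⟨v', ha, h2⟩ := hbig
          have h4 : 2 ≤ (if G.Adj v v' then ((clip3 (∑ w, (g (v', w) : ℕ)) : Fin 4) : ℕ) else 0) := by
            rw [if_pos ha, hfval]
            exact le_min (by norm_num) h2
          exact le_trans h4 (Finset.single_le_sum
            (f := fun u => if G.Adj v u then ((clip3 (∑ w, (g (u, w) : ℕ)) : Fin 4) : ℕ) else 0)
            (fun i _ => Nat.zero_le _) (Finset.mem_univ v'))
        · push_neg at hbig
          have heq : ∀ v' ∈ Finset.univ,
              (if G.Adj v v' then ((clip3 (∑ w, (g (v', w) : ℕ)) : Fin 4) : ℕ) else 0)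
              = if G.Adj v v' then (∑ w, (g (v', w) : ℕ)) else 0 := by
            intro v' _
            by_cases ha : G.Adj v v'
            · rw [if_pos ha, if_pos ha, hfval,
                Nat.min_eq_right (le_trans (le_of_lt (hbig v' ha)) (by norm_num))]
            · rw [if_neg ha, if_neg ha]
          rw [Finset.sum_congr rfl heq]
          exact hc
    calc gammaW G ![2,2,2,0] ≤ ∑ v, ((clip3 (∑ w, (g (v, w) : ℕ)) : Fin 4) : ℕ) :=
        Nat.sInf_le ⟨_, hWf, rfl⟩
      _ ≤ ∑ v, ∑ w, (g (v, w) : ℕ) := Finset.sum_le_sum fun v _ => min_le_right _ _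
      _ = ∑ p : V × W, (g p : ℕ) := by rw [Fintype.sum_prod_type]
      _ = gammaI (lexProd G H) := hgsum
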